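/- arXiv:2105.05297 — 3 statements merged into one kernel-verified Lean document; each statement's English description precedes it below -/
import Mathlib

section
/- Let r > 0, λ > 0, ρ ≠ 0 and σ² > 0 be real numbers, and define f : [0,1) → ℝ by f(γ) = −r ρ² (1−γ) σ² + (λ/2)·log(1−γ). Then f attains its maximum on [0,1) at the unique point γ* = max(0, 1 − λ/(2 r ρ² σ²)); i.e., f(γ*) ≥ f(γ) for all γ ∈ [0,1), with strict inequality for γ ≠ γ*. -/
/-- Core inequality: on `(0,1]`, `g(t) = -a t + c log t` is uniquely maximized
at `s = min 1 (c/a)`. -/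
lemma core_opt (a c t : ℝ) (ha : 0 < a) (hc : 0 < c) (ht : 0 < t) (ht1 : t ≤ 1) :
    -a * t + c * Real.log t ≤ -a * min 1 (c / a) + c * Real.log (min 1 (c / a)) ∧
    (t ≠ min 1 (c / a) →
      -a * t + c * Real.log t < -a * min 1 (c / a) + c * Real.log (min 1 (c / a))) := by
  have hca : 0 < c / a := div_pos hc ha
  rcases le_or_gt (c / a) 1 with h | h
  · have hmin : min 1 (c / a) = c / a := min_eq_right h
    rw [hmin]
    have hlogdiv : Real.log (t / (c / a)) ≤ t / (c / a) - 1 :=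
      Real.log_le_sub_one_of_pos (div_pos ht hca)
    have hld : Real.log (t / (c / a)) = Real.log t - Real.log (c / a) :=
      Real.log_div ht.ne' hca.ne'
    have hdiv : t / (c / a) = a * t / c := by field_simp
    have key : Real.log t - Real.log (c / a) ≤ a * t / c - 1 := by
      rw [← hld, ← hdiv]; exact hlogdiv
    constructor
    · nlinarith [mul_le_mul_of_nonneg_left key hc.le,
        mul_div_cancel₀ (a * t) hc.ne', mul_div_cancel₀ c ha.ne']
    · intro hne
      have hne1 : t / (c / a) ≠ 1 := by
        intro heq
        apply hne
        field_simp at heq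
        have : t = c / a := by field_simp; nlinarith
        exact this
      have hlogdiv' : Real.log (t / (c / a)) < t / (c / a) - 1 :=
        Real.log_lt_sub_one_of_pos (div_pos ht hca) hne1
      have key' : Real.log t - Real.log (c / a) < a * t / c - 1 := by
        rw [← hld, ← hdiv]; exact hlogdiv'
      nlinarith [mul_lt_mul_of_pos_left key' hc,
        mul_div_cancel₀ (a * t) hc.ne', mul_div_cancel₀ c ha.ne']
  · have hmin : min 1 (c / a) = 1 := min_eq_left h.le
    have hac : a < c := by
      have := (one_lt_div ha).mp h
      linarith
    rw [hmin, Real.log_one]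
    rcases eq_or_ne t 1 with rfl | hne1
    · simp
    · have hlt : Real.log t < t - 1 := Real.log_lt_sub_one_of_pos ht hne1
      have hlogneg : Real.log t < 0 := by
        have := Real.log_neg ht (lt_of_le_of_ne ht1 hne1)
        exact this
      have : c * Real.log t < a * Real.log t := by nlinarith
      have h2 : a * Real.log t < a * (t - 1) := by nlinarith
      constructor
      · nlinarith
      · intro _; nlinarith

/-- Lemma 1 (optimal attention): the objective
`f(γ) = −r ρ² (1−γ) σ² + (λ/2)·log(1−γ)` attains its maximum on `[0,1)`
at the unique point `γ* = max(0, 1 − λ/(2 r ρ² σ²))`. -/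
theorem optimal_attention
    (r lam ρ σ2 : ℝ) (hr : 0 < r) (hlam : 0 < lam) (hρ : ρ ≠ 0) (hσ : 0 < σ2)
    (f : ℝ → ℝ)
    (hf : ∀ γ, f γ = -r * ρ ^ 2 * (1 - γ) * σ2 + (lam / 2) * Real.log (1 - γ))
    (γstar : ℝ) (hγstar : γstar = max 0 (1 - lam / (2 * r * ρ ^ 2 * σ2))) :
    γstar ∈ Set.Ico (0 : ℝ) 1 ∧
      ∀ γ ∈ Set.Ico (0 : ℝ) 1, f γ ≤ f γstar ∧ (γ ≠ γstar → f γ < f γstar) := by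
  set a := r * ρ ^ 2 * σ2 with ha_def
  have ha : 0 < a := by
    have h2 : 0 < ρ ^ 2 := by positivity
    positivity
  set c := lam / 2 with hc_def
  have hc : 0 < c := by positivity
  have hca : 0 < c / a := div_pos hc ha
  have hstar_eq : γstar = 1 - min 1 (c / a) := by
    rw [hγstar]
    have : lam / (2 * r * ρ ^ 2 * σ2) = c / a := by
      rw [hc_def, ha_def]; field_simp
    rw [this]
    rcases le_or_gt (c / a) 1 with h | h
    · rw [min_eq_right h, max_eq_right (by linarith)]
    · rw [min_eq_left h.le, max_eq_left (by linarith)]; norm_num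
  have hfa : ∀ γ, f γ = -a * (1 - γ) + c * Real.log (1 - γ) := by
    intro γ; rw [hf γ, ha_def, hc_def]; ring
  have hsmem : 0 < min 1 (c / a) ∧ min 1 (c / a) ≤ 1 :=
    ⟨lt_min one_pos hca, min_le_left _ _⟩
  constructor
  · constructor
    · rw [hstar_eq]; linarith [hsmem.2]
    · rw [hstar_eq]; linarith [hsmem.1]
  · intro γ hγ
    have ht : 0 < 1 - γ := by linarith [hγ.2]
    have ht1 : 1 - γ ≤ 1 := by linarith [hγ.1]
    obtain ⟨hle, hlt⟩ := core_opt a c (1 - γ) ha hc ht ht1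
    have hfs : f γstar = -a * min 1 (c / a) + c * Real.log (min 1 (c / a)) := by
      rw [hfa, hstar_eq]; ring_nf
    constructor
    · rw [hfa, hfs]; exact hle
    · intro hne
      rw [hfa, hfs]
      apply hlt
      intro heq
      apply hne
      rw [hstar_eq]; linarith
end

section
/- Let r > 0, λ > 0, ρ ≠ 0 and σ² > 0 with λ ≥ 2 r ρ² σ², and define f : [0,1) → ℝ by f(γ) = −r ρ² (1−γ) σ² + (λ/2)·log(1−γ). Then f is strictly decreasing on (0,1) and f(0) > f(γ) for every γ ∈ (0,1); in particular γ* = 0 is the unique maximizer of f on [0,1). -/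
/-- Corner-solution case of Lemma 1: if `λ ≥ 2 r ρ² σ²`, then the objective
`f(γ) = −r ρ² (1−γ) σ² + (λ/2)·log(1−γ)` is strictly decreasing on `(0,1)`,
`f(0) > f(γ)` for every `γ ∈ (0,1)`, and `γ* = 0` is the unique maximizer of
`f` on `[0,1)`. -/
theorem optimal_attention_corner
    (r lam ρ σ2 : ℝ) (hr : 0 < r) (hlam : 0 < lam) (hρ : ρ ≠ 0) (hσ : 0 < σ2)
    (hcorner : 2 * r * ρ ^ 2 * σ2 ≤ lam)
    (f : ℝ → ℝ)
    (hf : ∀ γ, f γ = -r * ρ ^ 2 * (1 - γ) * σ2 + (lam / 2) * Real.log (1 - γ)) :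
    StrictAntiOn f (Set.Ioo (0 : ℝ) 1) ∧
      (∀ γ ∈ Set.Ioo (0 : ℝ) 1, f 0 > f γ) ∧
      ∀ γ ∈ Set.Ico (0 : ℝ) 1, f γ ≤ f 0 ∧ (γ ≠ 0 → f γ < f 0) := by
  have hρ2 : 0 < ρ ^ 2 := pow_two_pos_of_ne_zero hρ
  have hc : 0 < r * ρ ^ 2 * σ2 := by positivity
  -- f 0 > f γ for γ ∈ (0,1)
  have key0 : ∀ γ : ℝ, 0 < γ → γ < 1 → f γ < f 0 := by
    intro b hb hb1
    rw [hf, hf]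
    have h1b : 0 < 1 - b := by linarith
    have hlog : Real.log (1 - b) < -b := by
      have := Real.log_lt_sub_one_of_pos h1b (by linarith)
      linarith
    have : lam / 2 * Real.log (1 - b) < lam / 2 * (-b) :=
      (mul_lt_mul_iff_right₀ (by linarith)).mpr hlog
    simp only [sub_zero, Real.log_one]
    nlinarith [mul_pos hc hb]
  have key : ∀ a b : ℝ, 0 < a → a < b → b < 1 → f b < f a := by
    intro a b ha hab hb1
    rw [hf, hf]
    have h1a : 0 < 1 - a := by linarith
    have h1b : 0 < 1 - b := by linarith
    have hq : 0 < (1 - b) / (1 - a) := by positivity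
    have hlog : Real.log (1 - b) - Real.log (1 - a) ≤ (a - b) / (1 - a) := by
      have h := Real.log_le_sub_one_of_pos hq
      rw [Real.log_div h1b.ne' h1a.ne'] at h
      have heq : (1 - b) / (1 - a) - 1 = (a - b) / (1 - a) := by
        field_simp
        ring
      linarith [heq ▸ h]
    have hstep1 : (a - b) / (1 - a) < a - b := by
      rw [div_lt_iff₀ h1a]
      nlinarith
    have hstep2 : lam / 2 * (Real.log (1 - b) - Real.log (1 - a)) < lam / 2 * (a - b) :=
      (mul_lt_mul_iff_right₀ (by linarith)).mpr (lt_of_le_of_lt hlog hstep1)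
    nlinarith [mul_le_mul_of_nonpos_right (show r * ρ ^ 2 * σ2 ≤ lam / 2 by linarith)
      (show a - b ≤ 0 by linarith)]
  refine ⟨?_, ?_, ?_⟩
  · intro a ha b hb hab
    exact key a b ha.1 hab hb.2
  · intro γ hγ
    exact key0 γ hγ.1 hγ.2
  · intro γ hγ
    rcases eq_or_lt_of_le hγ.1 with h | h
    · exact ⟨by rw [← h], fun hne => absurd h.symm hne⟩
    · exact ⟨(key0 γ h hγ.2).le, fun _ => key0 γ h hγ.2⟩
end

section
/- Let β, γ, κ, φ, χ be real numbers with κ ≠ 0, β ≠ 0 and φ ≠ 0, and let π, y, μ₁, μ₂, μ₂_prev, ϕ_t, ϕ_prev be real numbers satisfying the first-order conditions: (a) −π + μ₁(1−βγ) − γφμ₂ = 0; (b) −χ y − κ μ₁ + μ₂ − β⁻¹ μ₂_prev = 0; (c) μ₂ φ = ϕ_t and μ₂_prev φ = ϕ_prev. Then π + (χ/κ)(1−βγ) y = ϕ_t·((1−βγ)/(φκ) − γ) − ((1−βγ)/(κβφ))·ϕ_prev. -/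
/-- Proposition 3 (first part): the first-order conditions of the Ramsey
problem imply the optimal target rule under limited attention with an
effective lower bound:
`π + (χ/κ)(1−βγ) y = ϕ_t((1−βγ)/(φκ) − γ) − ((1−βγ)/(κβφ)) ϕ_prev`. -/
theorem optimal_target_rule_elb
    (β γ κ φ χ : ℝ) (hκ : κ ≠ 0) (hβ : β ≠ 0) (hφ : φ ≠ 0)
    (π y μ₁ μ₂ μ₂prev ϕt ϕprev : ℝ)
    (ha : -π + μ₁ * (1 - β * γ) - γ * φ * μ₂ = 0)
    (hb : -χ * y - κ * μ₁ + μ₂ - β⁻¹ * μ₂prev = 0)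
    (hc : μ₂ * φ = ϕt) (hcprev : μ₂prev * φ = ϕprev) :
    π + (χ / κ) * (1 - β * γ) * y
      = ϕt * ((1 - β * γ) / (φ * κ) - γ) - ((1 - β * γ) / (κ * β * φ)) * ϕprev := by
  subst hc hcprev
  have hb' : -(β*χ*y) - β*κ*μ₁ + β*μ₂ - μ₂prev = 0 := by
    have := congrArg (fun x => β * x) hb
    field_simp at this
    linarith
  field_simp
  linear_combination (-(β*κ)) * ha - (1-β*γ) * hb'
end
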